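/- Let p be prime, d ≥ 1, and R_{p²}^Kor = {x_{a,k} : 0 ≤ a,k ≤ p-1} ⊆ [0,1)^d (a multiset of p² points) with x_{a,k} = ({k/p}, {ak/p}, {a²k/p}, ..., {a^{d-1}k/p}). Then the squared periodic L₂-discrepancy of R_{p²}^Kor is at most d²/(2^d p²). -/

import Mathlib

open Complex
open scoped Classical

/-- `r(0) = 1` and `r(k) = 2π|k|/√6` for `k ≠ 0`. -/
noncomputable def rker (k : ℤ) : ℝ :=
  if k = 0 then 1 else 2 * Real.pi * |(k : ℝ)| / Real.sqrt 6

/-- The squared periodic `L₂`-discrepancy of the `N`-point (multi)set `X ⊆ [0,1)^d`, in its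
exponential-sum (diaphony) form. -/
noncomputable def periodicL2sq {ι : Type*} [Fintype ι] (d : ℕ) (X : ι → Fin d → ℝ) : ℝ :=
  (1 / 3^d) * ∑' k : Fin d → ℤ,
    if k ≠ 0 then
      (1 / (∏ j, rker (k j))^2) *
        (‖(1 / (Fintype.card ι : ℂ)) * ∑ n : ι,
          Complex.exp (2 * Real.pi * I * (∑ j, (k j : ℂ) * (X n j : ℂ)))‖)^2
    else 0

noncomputable def w1 (k : ℤ) : ℝ := 1 / (rker k) ^ 2

lemma w1_nonneg (k : ℤ) : 0 ≤ w1 k := by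
  unfold w1; positivity

lemma w1_zero : w1 0 = 1 := by simp [w1, rker]

lemma w1_eq (k : ℤ) (hk : k ≠ 0) : w1 k = 3 / (2 * Real.pi ^ 2 * (k:ℝ) ^ 2) := by
  have h6 : Real.sqrt 6 ^ 2 = 6 := Real.sq_sqrt (by norm_num)
  have : (rker k) ^ 2 = 2 * Real.pi ^ 2 * (k:ℝ) ^ 2 / 3 := by
    rw [rker, if_neg hk, div_pow, mul_pow, mul_pow, h6, _root_.sq_abs]
    ring
  have hpi : Real.pi ≠ 0 := Real.pi_ne_zero
  have hk' : (k:ℝ) ≠ 0 := by exact_mod_cast hk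
  rw [w1, this]
  field_simp

lemma hasSum_w1_nat : HasSum (fun n : ℕ => w1 n) (5/4) := by
  have hb : HasSum (fun n : ℕ => 3 / (2 * Real.pi ^ 2) * ((1:ℝ) / (n:ℝ)^2))
      (3 / (2 * Real.pi ^ 2) * (Real.pi ^ 2 / 6)) := hasSum_zeta_two.mul_left _
  have hu := hb.update 0 1
  have hpi : Real.pi ≠ 0 := Real.pi_ne_zero
  have hval : 3 / (2 * Real.pi ^ 2) * (Real.pi ^ 2 / 6) = 1/4 := by
    field_simp; ring
  have heq : Function.update (fun n : ℕ => 3 / (2 * Real.pi ^ 2) * ((1:ℝ) / (n:ℝ)^2)) 0 1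
      = fun n : ℕ => w1 n := by
    funext n
    rcases eq_or_ne n 0 with rfl | hn
    · simp [w1_zero]
    · rw [Function.update_apply, if_neg hn, w1_eq _ (by exact_mod_cast hn)]
      field_simp
      norm_cast
  rw [heq] at hu
  have h5 : (5/4:ℝ) = 1 - 3 / (2 * Real.pi ^ 2) * (1 / ((0:ℕ):ℝ) ^ 2)
      + 3 / (2 * Real.pi ^ 2) * (Real.pi ^ 2 / 6) := by
    rw [hval]; norm_num
  rw [h5]; exact hu

lemma hasSum_w1_negsucc : HasSum (fun n : ℕ => w1 (-(n+1))) (1/4) := by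
  have hb : HasSum (fun n : ℕ => 3 / (2 * Real.pi ^ 2) * ((1:ℝ) / (n:ℝ)^2))
      (3 / (2 * Real.pi ^ 2) * (Real.pi ^ 2 / 6)) := hasSum_zeta_two.mul_left _
  have h1 : HasSum (fun n : ℕ => 3 / (2 * Real.pi ^ 2) * ((1:ℝ) / ((n+1:ℕ):ℝ)^2))
      (3 / (2 * Real.pi ^ 2) * (Real.pi ^ 2 / 6)) := by
    rw [hasSum_nat_add_iff (f := fun n : ℕ => 3 / (2 * Real.pi ^ 2) * ((1:ℝ) / (n:ℝ)^2)) 1]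
    simpa using hb
  have hval : 3 / (2 * Real.pi ^ 2) * (Real.pi ^ 2 / 6) = 1/4 := by
    have hpi : Real.pi ≠ 0 := Real.pi_ne_zero
    field_simp; ring
  rw [hval] at h1
  convert h1 using 2 with n
  rw [w1_eq _ (by omega)]
  push_cast
  rw [neg_sq, mul_one_div, div_div]

lemma hasSum_w1 : HasSum w1 (3/2) := by
  have := HasSum.of_nat_of_neg_add_one hasSum_w1_nat hasSum_w1_negsucc
  convert this using 1
  norm_num

lemma hasSum_w1_mul (p : ℕ) (hp : 0 < p) :
    HasSum (fun m : ℤ => w1 (p * m)) (1 + 1 / (2 * (p:ℝ)^2)) := by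
  have hps : ((p:ℤ):ℝ) ≠ 0 := by
    simp only [Int.cast_natCast]; positivity
  have hg : HasSum (fun m : ℤ => (1 / (p:ℝ)^2) * w1 m) ((1 / (p:ℝ)^2) * (3/2)) :=
    hasSum_w1.mul_left _
  have hu := hg.update 0 1
  have heq : Function.update (fun m : ℤ => (1 / (p:ℝ)^2) * w1 m) 0 1
      = fun m : ℤ => w1 (p * m) := by
    funext m
    rcases eq_or_ne m 0 with rfl | hm
    · simp [w1_zero]
    · rw [Function.update_apply, if_neg hm]
      have hpm : (p:ℤ) * m ≠ 0 := by
        apply mul_ne_zero _ hm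
        exact_mod_cast hp.ne'
      rw [w1_eq _ hm, w1_eq _ hpm]
      push_cast
      have hpi : Real.pi ≠ 0 := Real.pi_ne_zero
      have hm' : (m:ℝ) ≠ 0 := by exact_mod_cast hm
      have hp' : (p:ℝ) ≠ 0 := by positivity
      field_simp
  rw [heq] at hu
  have h5 : (1 + 1 / (2 * (p:ℝ)^2)) = 1 - 1 / (p:ℝ)^2 * w1 0 + 1 / (p:ℝ)^2 * (3/2) := by
    rw [w1_zero]; ring
  rw [h5]; exact hu

lemma hasSum_pi_prod {g : ℤ → ℝ} (hg0 : ∀ k, 0 ≤ g k) {S : ℝ} (hg : HasSum g S) :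
    ∀ d : ℕ, HasSum (fun k : Fin d → ℤ => ∏ j, g (k j)) (S ^ d) := by
  intro d
  induction d with
  | zero =>
    have h := hasSum_single (f := fun k : Fin 0 → ℤ => ∏ j, g (k j)) 0
      (fun b' hb' => absurd (funext fun i => i.elim0) hb')
    simpa using h
  | succ n ih =>
    have hn1 : Summable (fun k : ℤ => ‖g k‖) := by
      have h1 : ∀ k : ℤ, ‖g k‖ = g k := fun k => Real.norm_of_nonneg (hg0 k)
      simpa [h1] using hg.summable
    have hn2 : Summable (fun k : Fin n → ℤ => ‖∏ j, g (k j)‖) := by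
      have : ∀ k : Fin n → ℤ, ‖∏ j, g (k j)‖ = ∏ j, g (k j) := fun k =>
        Real.norm_of_nonneg (Finset.prod_nonneg fun j _ => hg0 _)
      simpa [this] using ih.summable
    have hsumm : Summable (fun x : ℤ × (Fin n → ℤ) => g x.1 * ∏ j, g (x.2 j)) :=
      summable_mul_of_summable_norm (f := g) (g := fun k : Fin n → ℤ => ∏ j, g (k j)) hn1 hn2
    have h2 : HasSum (fun x : ℤ × (Fin n → ℤ) => g x.1 * ∏ j, g (x.2 j)) (S * S^n) :=
      HasSum.mul (f := g) (g := fun k : Fin n → ℤ => ∏ j, g (k j)) hg ih hsumm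
    apply ((Fin.consEquiv (fun _ : Fin (n+1) => ℤ)).hasSum_iff).mp
    have hco : ((fun k : Fin (n+1) → ℤ => ∏ j, g (k j)) ∘ (Fin.consEquiv (fun _ : Fin (n+1) => ℤ)))
        = fun x : ℤ × (Fin n → ℤ) => g x.1 * ∏ j, g (x.2 j) := by
      funext x
      simp [Fin.consEquiv, Fin.prod_univ_succ]
    rw [hco, pow_succ']
    exact h2

lemma expsum (p : ℕ) (hp : 0 < p) (c : ℤ) :
    (∑ m : Fin p, Complex.exp (2 * Real.pi * I * ((m:ℂ) * (c:ℂ) / (p:ℂ))))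
      = if (p:ℤ) ∣ c then (p:ℂ) else 0 := by
  have hp' : (p:ℂ) ≠ 0 := by exact_mod_cast hp.ne'
  set z : ℂ := Complex.exp (2 * Real.pi * I * ((c:ℂ) / (p:ℂ))) with hz
  have hzm : ∀ m : ℕ, Complex.exp (2 * Real.pi * I * ((m:ℂ) * (c:ℂ) / (p:ℂ))) = z ^ m := by
    intro m
    rw [hz, ← Complex.exp_nat_mul]
    ring_nf
  have hsum : (∑ m : Fin p, Complex.exp (2 * Real.pi * I * ((m:ℂ) * (c:ℂ) / (p:ℂ))))
      = ∑ m ∈ Finset.range p, z ^ m := by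
    rw [← Fin.sum_univ_eq_sum_range]
    exact Finset.sum_congr rfl fun m _ => hzm m
  rw [hsum]
  by_cases hdvd : (p:ℤ) ∣ c
  · obtain ⟨t, ht⟩ := hdvd
    have hz1 : z = 1 := by
      rw [hz, ht]
      push_cast
      rw [mul_comm ((p:ℂ)) ((t:ℂ)), mul_div_assoc, div_self hp', mul_one]
      have := Complex.exp_int_mul_two_pi_mul_I t
      rw [← this]
      ring_nf
    rw [if_pos ⟨t, ht⟩, hz1]
    simp
  · have hz1 : z ≠ 1 := by
      intro h
      rw [hz, Complex.exp_eq_one_iff] at h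
      obtain ⟨n, hn⟩ := h
      apply hdvd
      refine ⟨n, ?_⟩
      have h2 : (2:ℂ) * Real.pi * I ≠ 0 := by
        simp [Complex.I_ne_zero, Real.pi_ne_zero, Complex.ofReal_ne_zero]
      field_simp at hn
      have hc : (c:ℂ) = (p:ℂ) * (n:ℂ) :=
        mul_left_cancel₀ h2 (by rw [hn])
      exact_mod_cast hc
    have hzp : z ^ p = 1 := by
      rw [hz, ← Complex.exp_nat_mul]
      have : (p:ℂ) * (2 * Real.pi * I * ((c:ℂ) / (p:ℂ))) = (c:ℂ) * (2 * Real.pi * I) := by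
        field_simp
      rw [this]
      exact_mod_cast Complex.exp_int_mul_two_pi_mul_I c
    rw [if_neg hdvd, geom_sum_eq hz1, hzp]
    simp

lemma rootcount (p : ℕ) (hp : p.Prime) (d : ℕ) (hd : 1 ≤ d) (k : Fin d → ℤ)
    (hk : ¬ ∀ j, (p:ℤ) ∣ k j) :
    (Finset.univ.filter (fun a : Fin p =>
      (p:ℤ) ∣ ∑ j, k j * ((a:ℕ):ℤ) ^ (j:ℕ))).card ≤ d - 1 := by
  haveI : Fact p.Prime := ⟨hp⟩
  set F : Polynomial (ZMod p) :=
    ∑ j : Fin d, Polynomial.C ((k j : ZMod p)) * Polynomial.X ^ (j:ℕ) with hF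
  push_neg at hk
  obtain ⟨j0, hj0⟩ := hk
  have hcoeff : F.coeff (j0:ℕ) = (k j0 : ZMod p) := by
    rw [hF, Polynomial.finset_sum_coeff]
    rw [Finset.sum_eq_single j0]
    · simp
    · intro j _ hj
      rw [Polynomial.coeff_C_mul, Polynomial.coeff_X_pow, if_neg (by
        simpa [Fin.val_inj, eq_comm] using hj), mul_zero]
    · simp
  have hF0 : F ≠ 0 := by
    intro h
    rw [h, Polynomial.coeff_zero] at hcoeff
    exact hj0 ((ZMod.intCast_zmod_eq_zero_iff_dvd _ _).mp hcoeff.symm)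
  have hdeg : F.natDegree ≤ d - 1 := by
    rw [hF]
    apply Polynomial.natDegree_sum_le_of_forall_le
    intro j _
    exact (Polynomial.natDegree_C_mul_X_pow_le _ _).trans (by omega)
  have heval : ∀ a : Fin p, ((p:ℤ) ∣ ∑ j, k j * ((a:ℕ):ℤ) ^ (j:ℕ)) ↔
      F.eval (((a:ℕ) : ZMod p)) = 0 := by
    intro a
    rw [← ZMod.intCast_zmod_eq_zero_iff_dvd]
    constructor <;> intro h
    · rw [hF]
      simp only [Polynomial.eval_finset_sum, Polynomial.eval_mul, Polynomial.eval_C,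
        Polynomial.eval_pow, Polynomial.eval_X]
      rw [← h]
      push_cast
      rfl
    · rw [hF] at h
      simp only [Polynomial.eval_finset_sum, Polynomial.eval_mul, Polynomial.eval_C,
        Polynomial.eval_pow, Polynomial.eval_X] at h
      rw [← h]
      push_cast
      rfl
  set A := Finset.univ.filter (fun a : Fin p =>
      (p:ℤ) ∣ ∑ j, k j * ((a:ℕ):ℤ) ^ (j:ℕ)) with hA
  have hinj : ∀ a ∈ A, ∀ b ∈ A, (((a:ℕ):ℕ) : ZMod p) = (((b:ℕ):ℕ) : ZMod p) → a = b := by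
    intro a _ b _ hab
    have ha := ZMod.val_cast_of_lt a.isLt
    have hb := ZMod.val_cast_of_lt b.isLt
    have : (a:ℕ) = (b:ℕ) := by rw [← ha, ← hb, hab]
    exact Fin.ext this
  have hcard : A.card = (A.image (fun a : Fin p => ((a:ℕ) : ZMod p))).card :=
    (Finset.card_image_of_injOn hinj).symm
  rw [hcard]
  apply le_trans _ hdeg
  apply Polynomial.card_le_degree_of_subset_roots
  intro z hz
  simp only [Finset.mem_val, Finset.mem_image] at hz
  obtain ⟨a, ha, rfl⟩ := hz
  rw [hA, Finset.mem_filter] at ha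
  rw [Polynomial.mem_roots hF0]
  exact (heval a).mp ha.2

lemma S_bound (p : ℕ) (hp : p.Prime) (d : ℕ) (hd : 1 ≤ d) (k : Fin d → ℤ)
    (hk : ¬ ∀ j, (p:ℤ) ∣ k j) :
    ‖(∑ n : Fin p × Fin p,
      Complex.exp (2 * Real.pi * I * (∑ j, (k j : ℂ) *
        ((Int.fract (((n.1 : ℕ) : ℝ)^((j:ℕ)) * ((n.2 : ℕ) : ℝ) / p) : ℝ) : ℂ))))‖
      ≤ ((d:ℝ) - 1) * p := by
  have hppos : 0 < p := hp.pos
  set f : Fin p → ℤ := fun a => ∑ j, k j * ((a:ℕ):ℤ)^(j:ℕ) with hf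
  have hterm : ∀ a m : Fin p,
      Complex.exp (2 * Real.pi * I * (∑ j, (k j:ℂ) *
        ((Int.fract (((a:ℕ):ℝ)^((j:ℕ)) * ((m:ℕ):ℝ) / p) : ℝ) : ℂ)))
      = Complex.exp (2 * Real.pi * I * ((m:ℂ) * ((f a : ℤ):ℂ) / (p:ℂ))) := by
    intro a m
    set N : ℤ := ∑ j, k j * ⌊((a:ℕ):ℝ)^((j:ℕ)) * ((m:ℕ):ℝ) / p⌋ with hN
    have hfr : ∀ x : ℝ, ((Int.fract x : ℝ) : ℂ) = (x:ℂ) - ((⌊x⌋ : ℤ) : ℂ) := by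
      intro x; rw [Int.fract]; push_cast; ring
    have harg : (∑ j, (k j:ℂ) *
          ((Int.fract (((a:ℕ):ℝ)^((j:ℕ)) * ((m:ℕ):ℝ) / p) : ℝ) : ℂ))
        = (m:ℂ) * ((f a : ℤ):ℂ) / (p:ℂ) - ((N:ℤ):ℂ) := by
      simp only [hfr]
      simp only [mul_sub]
      rw [Finset.sum_sub_distrib]
      congr 1
      · rw [hf]
        push_cast
        rw [Finset.mul_sum, Finset.sum_div]
        exact Finset.sum_congr rfl fun j _ => by ring
      · rw [hN]
        push_cast
        rfl
    rw [harg]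
    have hsplit : 2 * (Real.pi:ℂ) * I * ((m:ℂ) * ((f a : ℤ):ℂ) / (p:ℂ) - ((N:ℤ):ℂ))
        = 2 * (Real.pi:ℂ) * I * ((m:ℂ) * ((f a : ℤ):ℂ) / (p:ℂ)) - (N:ℂ) * (2 * (Real.pi:ℂ) * I) := by
      ring
    rw [hsplit, Complex.exp_sub, Complex.exp_int_mul_two_pi_mul_I, div_one]
  have hstep : (∑ n : Fin p × Fin p,
      Complex.exp (2 * Real.pi * I * (∑ j, (k j : ℂ) *
        ((Int.fract (((n.1 : ℕ) : ℝ)^((j:ℕ)) * ((n.2 : ℕ) : ℝ) / p) : ℝ) : ℂ))))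
      = ∑ a : Fin p, (if (p:ℤ) ∣ f a then (p:ℂ) else 0) := by
    rw [Fintype.sum_prod_type]
    refine Finset.sum_congr rfl fun a _ => ?_
    rw [show (∑ m : Fin p, Complex.exp (2 * Real.pi * I * (∑ j, (k j : ℂ) *
        ((Int.fract (((a : ℕ) : ℝ)^((j:ℕ)) * ((m : ℕ) : ℝ) / p) : ℝ) : ℂ))))
      = ∑ m : Fin p, Complex.exp (2 * Real.pi * I * ((m:ℂ) * ((f a : ℤ):ℂ) / (p:ℂ)))
      from Finset.sum_congr rfl fun m _ => hterm a m]
    exact expsum p hppos (f a)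
  rw [hstep]
  refine (norm_sum_le _ _).trans ?_
  have habs : ∀ a : Fin p, ‖(if (p:ℤ) ∣ f a then (p:ℂ) else 0)‖
      = (if (p:ℤ) ∣ f a then (p:ℝ) else 0) := by
    intro a
    split_ifs
    · simp
    · simp
  rw [Finset.sum_congr rfl fun a _ => habs a]
  rw [Finset.sum_ite, Finset.sum_const_zero, add_zero, Finset.sum_const, nsmul_eq_mul]
  have hcard := rootcount p hp d hd k hk
  have hcast : ((Finset.univ.filter (fun a : Fin p => (p:ℤ) ∣ f a)).card : ℝ) ≤ (d:ℝ) - 1 := by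
    have h1 : ((Finset.univ.filter (fun a : Fin p => (p:ℤ) ∣ f a)).card : ℝ) ≤ ((d - 1 : ℕ) : ℝ) :=
      Nat.cast_le.mpr hcard
    refine h1.trans ?_
    rw [Nat.cast_sub hd]
    simp
  exact mul_le_mul_of_nonneg_right hcast (by positivity)

lemma pow_one_add_sub_le (x : ℝ) (hx : 0 ≤ x) :
    ∀ n : ℕ, (1+x)^(n+1) - 1 ≤ (n+1)*x*(1+x)^n := by
  intro n
  induction n with
  | zero => simp
  | succ n ih =>
    have h1 : (1+x)^(n+2) - 1 = ((1+x)^(n+1) - 1) + x*(1+x)^(n+1) := by ring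
    rw [h1]
    have h2 : (1+x)^n ≤ (1+x)^(n+1) :=
      pow_le_pow_right₀ (by linarith) (by omega)
    have h3 : ((n:ℝ)+1)*x*(1+x)^n ≤ ((n:ℝ)+1)*x*(1+x)^(n+1) :=
      mul_le_mul_of_nonneg_left h2 (by positivity)
    push_cast
    nlinarith [ih]

lemma final_arith (p d : ℕ) (hp : 2 ≤ p) (hd : 1 ≤ d) :
    (1/3^d : ℝ) * (((d:ℝ)-1)^2/(p:ℝ)^2 * (3/2)^d + ((1 + 1/(2*(p:ℝ)^2))^d - 1))
      ≤ (d:ℝ)^2/(2^d*(p:ℝ)^2) := by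
  have hp2 : (2:ℝ) ≤ (p:ℝ) := by exact_mod_cast hp
  have hppos : (0:ℝ) < (p:ℝ)^2 := by positivity
  set x : ℝ := 1/(2*(p:ℝ)^2) with hxdef
  have hx0 : 0 ≤ x := by positivity
  have hx8 : x ≤ 1/8 := by
    rw [hxdef, div_le_div_iff₀ (by positivity) (by norm_num)]
    nlinarith
  have hx32 : 1 + x ≤ 3/2 := by linarith
  obtain ⟨e, rfl⟩ : ∃ e, d = e + 1 := ⟨d - 1, by omega⟩
  have hde : ((e+1:ℕ):ℝ) - 1 = (e:ℝ) := by push_cast; ring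
  have hmono : (1+x)^e ≤ (3/2)^e := pow_le_pow_left₀ (by linarith) hx32 e
  have hB1 : (1+x)^(e+1) - 1 ≤ ((e:ℝ)+1)*x*(3/2)^e :=
    (pow_one_add_sub_le x hx0 e).trans
      (mul_le_mul_of_nonneg_left hmono (by positivity))
  have h1 : ((e:ℝ)+1)*x*(3/2)^e = ((e:ℝ)+1)/(3*(p:ℝ)^2)*(3/2)^(e+1) := by
    rw [hxdef, pow_succ]
    field_simp
    ring
  set B : ℝ := (3/2:ℝ)^(e+1) with hBdef
  have hB0 : (0:ℝ) ≤ B := by positivity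
  have hc : (e:ℝ)^2 + ((e:ℝ)+1)/3 ≤ ((e:ℝ)+1)^2 := by
    have : (0:ℝ) ≤ (e:ℝ) := Nat.cast_nonneg e
    nlinarith
  rw [hde]
  calc (1/3^(e+1) : ℝ) * ((e:ℝ)^2/(p:ℝ)^2 * B + ((1+x)^(e+1) - 1))
      ≤ (1/3^(e+1) : ℝ) * ((e:ℝ)^2/(p:ℝ)^2 * B + ((e:ℝ)+1)/(3*(p:ℝ)^2)*B) := by
        apply mul_le_mul_of_nonneg_left _ (by positivity)
        apply add_le_add (le_refl _)
        rw [← h1]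
        exact hB1
    _ ≤ (1/3^(e+1) : ℝ) * (((e:ℝ)+1)^2*B/(p:ℝ)^2) := by
        apply mul_le_mul_of_nonneg_left _ (by positivity)
        rw [show (e:ℝ)^2/(p:ℝ)^2 * B + ((e:ℝ)+1)/(3*(p:ℝ)^2)*B
            = ((e:ℝ)^2 + ((e:ℝ)+1)/3)*B/(p:ℝ)^2 by ring]
        gcongr
    _ = ((e+1:ℕ):ℝ)^2/(2^(e+1)*(p:ℝ)^2) := by
        rw [hBdef, div_pow]
        push_cast
        field_simp

/-- The squared periodic `L₂`-discrepancy of the Hua–Wang point set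
`R_{p²}^Kor = {({k/p},{ak/p},…,{a^{d-1}k/p}) : 0 ≤ a,k < p}` (a multiset of `p²` points)
is at most `d²/(2^d p²)`. -/
theorem periodicL2sq_korobov_R (p : ℕ) (hp : p.Prime) (d : ℕ) (hd : 1 ≤ d) :
    periodicL2sq d (fun (ak : Fin p × Fin p) (j : Fin d) =>
        Int.fract (((ak.1 : ℕ) : ℝ)^((j:ℕ)) * ((ak.2 : ℕ) : ℝ) / p))
      ≤ (d:ℝ)^2 / (2^d * p^2) := by
  have hp2 : 2 ≤ p := hp.two_le
  have hppos : 0 < p := hp.pos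
  have hpR : (0:ℝ) < (p:ℝ) := by exact_mod_cast hppos
  -- abbreviations
  set S : (Fin d → ℤ) → ℂ := fun k => ∑ n : Fin p × Fin p,
    Complex.exp (2 * Real.pi * I * (∑ j, (k j : ℂ) *
      ((Int.fract (((n.1 : ℕ) : ℝ)^((j:ℕ)) * ((n.2 : ℕ) : ℝ) / p) : ℝ) : ℂ))) with hS
  set F : (Fin d → ℤ) → ℝ := fun k => ∏ j, w1 (k j) with hFdef
  have hF0 : ∀ k, 0 ≤ F k := fun k => Finset.prod_nonneg fun j _ => w1_nonneg _
  set T : (Fin d → ℤ) → ℝ := fun k =>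
    if k ≠ 0 then
      (1 / (∏ j, rker (k j))^2) *
        (‖(1 / (Fintype.card (Fin p × Fin p) : ℂ)) * S k‖)^2
    else 0 with hTdef
  set c1 : ℝ := ((d:ℝ)-1)^2/(p:ℝ)^2 with hc1
  set M : (Fin d → ℤ) → ℝ := fun k =>
    c1 * F k + (if k ≠ 0 ∧ ∀ j, (p:ℤ) ∣ k j then F k else 0) with hM
  have hc10 : 0 ≤ c1 := by
    rw [hc1]; positivity
  -- sums of the majorant
  have hFsum : HasSum F ((3/2:ℝ)^d) := hasSum_pi_prod w1_nonneg hasSum_w1 d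
  have hM1 : HasSum (fun k => c1 * F k) (c1 * (3/2)^d) := hFsum.mul_left _
  have hG : HasSum (fun m : Fin d → ℤ => ∏ j, w1 ((p:ℤ) * m j))
      ((1 + 1/(2*(p:ℝ)^2))^d) :=
    hasSum_pi_prod (fun k => w1_nonneg _) (hasSum_w1_mul p hppos) d
  set ι : (Fin d → ℤ) → (Fin d → ℤ) := fun m j => (p:ℤ) * m j with hι
  have hιinj : Function.Injective ι := by
    intro m m' h
    funext j
    have := congrFun h j
    exact mul_left_cancel₀ (by exact_mod_cast hppos.ne') this
  have hvanish : ∀ k, k ∉ Set.range ι →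
      (if (∀ j, (p:ℤ) ∣ k j) then F k else 0) = 0 := by
    intro k hk
    rw [if_neg]
    intro hdvd
    exact hk ⟨fun j => k j / p, funext fun j => Int.mul_ediv_cancel' (hdvd j)⟩
  have hM2' : HasSum (fun k => if (∀ j, (p:ℤ) ∣ k j) then F k else 0)
      ((1 + 1/(2*(p:ℝ)^2))^d) := by
    apply (Function.Injective.hasSum_iff hιinj hvanish).mp
    have hcomp : ((fun k => if (∀ j, (p:ℤ) ∣ k j) then F k else 0) ∘ ι)
        = fun m : Fin d → ℤ => ∏ j, w1 ((p:ℤ) * m j) := by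
      funext m
      simp only [Function.comp_apply]
      rw [if_pos (fun j => ⟨m j, rfl⟩)]
    rw [hcomp]
    exact hG
  have hM2 : HasSum (fun k => if k ≠ 0 ∧ ∀ j, (p:ℤ) ∣ k j then F k else 0)
      ((1 + 1/(2*(p:ℝ)^2))^d - 1) := by
    have hu := hM2'.update 0 0
    have heq : Function.update (fun k => if (∀ j, (p:ℤ) ∣ k j) then F k else 0) 0 0
        = fun k => if k ≠ 0 ∧ ∀ j, (p:ℤ) ∣ k j then F k else 0 := by
      funext k
      rcases eq_or_ne k 0 with rfl | hk
      · simp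
      · rw [Function.update_of_ne hk]
        by_cases hdvd : ∀ j, (p:ℤ) ∣ k j
        · rw [if_pos hdvd, if_pos ⟨hk, hdvd⟩]
        · rw [if_neg hdvd, if_neg (fun h => hdvd h.2)]
    rw [heq] at hu
    have hF01 : F 0 = 1 := by
      rw [hFdef]
      simp [w1_zero]
    have hcond : (if ∀ j : Fin d, (p:ℤ) ∣ (0 : Fin d → ℤ) j then F 0 else 0) = 1 := by
      rw [if_pos]
      · exact hF01
      · intro j
        exact dvd_zero _
    have hval : ((1 + 1/(2*(p:ℝ)^2))^d - 1 : ℝ)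
        = 0 - (if ∀ j : Fin d, (p:ℤ) ∣ (0 : Fin d → ℤ) j then F 0 else 0)
          + (1 + 1/(2*(p:ℝ)^2))^d := by
      rw [hcond]
      ring
    rw [hval]
    exact hu
  have hMsum : HasSum M (c1 * (3/2)^d + ((1 + 1/(2*(p:ℝ)^2))^d - 1)) := hM1.add hM2
  -- pointwise bounds
  have hw : ∀ k : Fin d → ℤ, (1 : ℝ) / (∏ j, rker (k j))^2 = F k := by
    intro k
    rw [hFdef]
    simp only [w1, one_div]
    rw [← Finset.prod_pow, Finset.prod_inv_distrib]
  have hcard : ((Fintype.card (Fin p × Fin p) : ℕ) : ℂ) = (p:ℂ)^2 := by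
    simp [sq]
  have habs : ∀ k, ‖(1 / (Fintype.card (Fin p × Fin p) : ℂ)) * S k‖
      = ‖S k‖ / (p:ℝ)^2 := by
    intro k
    rw [norm_mul, norm_div, norm_one, hcard, norm_pow, Complex.norm_natCast,
      one_div_mul_eq_div]
  have habsexp : ∀ k : Fin d → ℤ, ∀ n : Fin p × Fin p,
      ‖(Complex.exp (2 * Real.pi * I * (∑ j, (k j : ℂ) *
        ((Int.fract (((n.1 : ℕ) : ℝ)^((j:ℕ)) * ((n.2 : ℕ) : ℝ) / p) : ℝ) : ℂ))))‖ = 1 := by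
    intro k n
    have harg : 2 * (Real.pi:ℂ) * I * (∑ j, (k j : ℂ) *
        ((Int.fract (((n.1 : ℕ) : ℝ)^((j:ℕ)) * ((n.2 : ℕ) : ℝ) / p) : ℝ) : ℂ))
        = ((2 * Real.pi * (∑ j, (k j : ℝ) *
            Int.fract (((n.1 : ℕ) : ℝ)^((j:ℕ)) * ((n.2 : ℕ) : ℝ) / p)) : ℝ) : ℂ) * I := by
      push_cast
      ring
    rw [harg, Complex.norm_exp_ofReal_mul_I]
  have habsS : ∀ k, ‖S k‖ ≤ (p:ℝ)^2 := by
    intro k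
    rw [hS]
    refine (norm_sum_le _ _).trans ?_
    rw [Finset.sum_congr rfl fun n _ => habsexp k n]
    simp [sq]
  have hTM : ∀ k, T k ≤ M k := by
    intro k
    simp only [hTdef, hM]
    rcases eq_or_ne k 0 with rfl | hk
    · rw [if_neg (not_not_intro rfl)]
      have h2nd : (0:ℝ) ≤ (if (0 : Fin d → ℤ) ≠ 0 ∧ ∀ j, (p:ℤ) ∣ (0 : Fin d → ℤ) j
          then F 0 else 0) := by
        split_ifs
        · exact hF0 _
        · exact le_refl 0
      exact add_nonneg (mul_nonneg hc10 (hF0 _)) h2nd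
    · rw [if_pos hk, hw k, habs k]
      by_cases hdvd : ∀ j, (p:ℤ) ∣ k j
      · have ht1 : ‖S k‖ / (p:ℝ)^2 ≤ 1 := by
          rw [div_le_one (by positivity)]
          exact habsS k
        have ht0 : 0 ≤ ‖S k‖ / (p:ℝ)^2 :=
          div_nonneg (norm_nonneg _) (sq_nonneg _)
        have h2 : (‖S k‖ / (p:ℝ)^2)^2 ≤ 1 := by
          nlinarith [ht0, ht1]
        calc F k * (‖S k‖ / (p:ℝ)^2)^2
            ≤ F k * 1 := mul_le_mul_of_nonneg_left h2 (hF0 k)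
          _ = F k := mul_one _
          _ ≤ c1 * F k + (if k ≠ 0 ∧ ∀ j, (p:ℤ) ∣ k j then F k else 0) := by
              rw [if_pos ⟨hk, hdvd⟩]
              nlinarith [mul_nonneg hc10 (hF0 k)]
      · have hb := S_bound p hp d hd k hdvd
        have ht1 : ‖S k‖ / (p:ℝ)^2 ≤ ((d:ℝ)-1)/(p:ℝ) := by
          rw [div_le_div_iff₀ (by positivity) hpR]
          calc ‖S k‖ * (p:ℝ) ≤ (((d:ℝ)-1) * p) * p :=
            mul_le_mul_of_nonneg_right hb hpR.le
          _ = ((d:ℝ)-1) * (p:ℝ)^2 := by ring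
        have hd1 : (0:ℝ) ≤ (d:ℝ) - 1 := by
          have : (1:ℝ) ≤ (d:ℝ) := by exact_mod_cast hd
          linarith
        have h2 : (‖S k‖ / (p:ℝ)^2)^2 ≤ (((d:ℝ)-1)/(p:ℝ))^2 := by
          apply pow_le_pow_left₀ (by positivity) ht1
        have h3 : (((d:ℝ)-1)/(p:ℝ))^2 = c1 := by
          rw [hc1, div_pow]
        calc F k * (‖S k‖ / (p:ℝ)^2)^2
            ≤ F k * c1 := by
              rw [← h3]
              exact mul_le_mul_of_nonneg_left h2 (hF0 k)
          _ = c1 * F k := mul_comm _ _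
          _ ≤ c1 * F k + (if k ≠ 0 ∧ ∀ j, (p:ℤ) ∣ k j then F k else 0) := by
              rw [if_neg (fun h => hdvd h.2)]
              simp
  have hT0 : ∀ k, 0 ≤ T k := by
    intro k
    simp only [hTdef]
    split_ifs
    · have h1 : (0:ℝ) ≤ 1 / (∏ j, rker (k j))^2 := by positivity
      exact mul_nonneg h1 (sq_nonneg _)
    · exact le_refl 0
  have hTs : Summable T := Summable.of_nonneg_of_le hT0 hTM hMsum.summable
  -- conclude
  unfold periodicL2sq
  calc (1/3^d : ℝ) * ∑' k : Fin d → ℤ,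
      (if k ≠ 0 then
        (1 / (∏ j, rker (k j))^2) *
          (‖(1 / (Fintype.card (Fin p × Fin p) : ℂ)) * ∑ n : Fin p × Fin p,
            Complex.exp (2 * Real.pi * I * (∑ j, (k j : ℂ) *
              ((Int.fract (((n.1 : ℕ) : ℝ)^((j:ℕ)) * ((n.2 : ℕ) : ℝ) / p) : ℝ) : ℂ)))‖)^2
      else 0)
      ≤ (1/3^d : ℝ) * (c1 * (3/2)^d + ((1 + 1/(2*(p:ℝ)^2))^d - 1)) := by
        apply mul_le_mul_of_nonneg_left _ (by positivity)
        rw [← hMsum.tsum_eq]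
        exact Summable.tsum_le_tsum hTM hTs hMsum.summable
    _ ≤ (d:ℝ)^2 / (2^d * (p:ℝ)^2) := by
        rw [hc1]
        exact final_arith p d hp2 hd
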